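/- Let a ≠ 0, ±1 and define φ(s) = ((a+1)s + sqrt(1-s²))^((1+a)/2) · ((a-1)s + sqrt(1-s²))^((1-a)/2) on an open interval of s ∈ (-1,1) where both bases are positive. Then Q(s) = φ'(s)/(φ(s) - s·φ'(s)) equals 2a·sqrt(1-s²) + (a²-2)·s. -/

import Mathlib

open Real

theorem stmt_5 (a : ℝ) (ha : a ≠ 0) (ha1 : a ≠ 1) (ha2 : a ≠ -1) (φ : ℝ → ℝ)
    (hφ : ∀ s : ℝ, φ s =
      ((a + 1) * s + Real.sqrt (1 - s ^ 2)) ^ ((1 + a) / 2) *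
      ((a - 1) * s + Real.sqrt (1 - s ^ 2)) ^ ((1 - a) / 2))
    (s : ℝ) (hs : |s| < 1)
    (hpos1 : 0 < (a + 1) * s + Real.sqrt (1 - s ^ 2))
    (hpos2 : 0 < (a - 1) * s + Real.sqrt (1 - s ^ 2))
    (hden : φ s - s * deriv φ s ≠ 0) :
    deriv φ s / (φ s - s * deriv φ s) =
      2 * a * Real.sqrt (1 - s ^ 2) + (a ^ 2 - 2) * s := by
  have hs2 : 0 < 1 - s ^ 2 := by nlinarith [abs_lt.mp hs]
  set w := Real.sqrt (1 - s ^ 2) with hw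
  have hw2 : w ^ 2 = 1 - s ^ 2 := Real.sq_sqrt hs2.le
  have hwpos : 0 < w := Real.sqrt_pos.mpr hs2
  have hsq : HasDerivAt (fun x : ℝ => 1 - x ^ 2) (-(2 * s)) s := by
    simpa using ((hasDerivAt_pow 2 s).const_sub 1)
  have hw' : HasDerivAt (fun x : ℝ => Real.sqrt (1 - x ^ 2)) (-(2 * s) / (2 * w)) s :=
    hsq.sqrt (by positivity)
  have hu : HasDerivAt (fun x : ℝ => (a + 1) * x + Real.sqrt (1 - x ^ 2))
      ((a + 1) + -(2 * s) / (2 * w)) s := by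
    exact (((hasDerivAt_id s).const_mul (a + 1)).add hw').congr_deriv (by simp)
  have hv : HasDerivAt (fun x : ℝ => (a - 1) * x + Real.sqrt (1 - x ^ 2))
      ((a - 1) + -(2 * s) / (2 * w)) s := by
    exact (((hasDerivAt_id s).const_mul (a - 1)).add hw').congr_deriv (by simp)
  have hU : HasDerivAt (fun x : ℝ => ((a + 1) * x + Real.sqrt (1 - x ^ 2)) ^ ((1 + a) / 2))
      (((a + 1) + -(2 * s) / (2 * w)) * ((1 + a) / 2) * ((a + 1) * s + w) ^ ((1 + a) / 2 - 1)) s :=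
    hu.rpow_const (Or.inl hpos1.ne')
  have hV : HasDerivAt (fun x : ℝ => ((a - 1) * x + Real.sqrt (1 - x ^ 2)) ^ ((1 - a) / 2))
      (((a - 1) + -(2 * s) / (2 * w)) * ((1 - a) / 2) * ((a - 1) * s + w) ^ ((1 - a) / 2 - 1)) s :=
    hv.rpow_const (Or.inl hpos2.ne')
  have hφfun : φ = fun x : ℝ =>
      ((a + 1) * x + Real.sqrt (1 - x ^ 2)) ^ ((1 + a) / 2) *
      ((a - 1) * x + Real.sqrt (1 - x ^ 2)) ^ ((1 - a) / 2) := funext hφ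
  have hD : deriv φ s =
      (((a + 1) + -(2 * s) / (2 * w)) * ((1 + a) / 2) * ((a + 1) * s + w) ^ ((1 + a) / 2 - 1)) *
        (((a - 1) * s + w) ^ ((1 - a) / 2)) +
      (((a + 1) * s + w) ^ ((1 + a) / 2)) *
        (((a - 1) + -(2 * s) / (2 * w)) * ((1 - a) / 2) * ((a - 1) * s + w) ^ ((1 - a) / 2 - 1)) := by
    rw [hφfun]
    exact (hU.mul hV).deriv
  set u : ℝ := (a + 1) * s + w with hudef
  set v : ℝ := (a - 1) * s + w with hvdef
  have hu0 : u ≠ 0 := hpos1.ne'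
  have hv0 : v ≠ 0 := hpos2.ne'
  have hw0 : w ≠ 0 := hwpos.ne'
  set U : ℝ := u ^ ((1 + a) / 2) with hUdef
  set V : ℝ := v ^ ((1 - a) / 2) with hVdef
  have hUpos : 0 < U := Real.rpow_pos_of_pos hpos1 _
  have hVpos : 0 < V := Real.rpow_pos_of_pos hpos2 _
  have hru : u ^ ((1 + a) / 2 - 1) = U / u := by
    rw [hUdef, Real.rpow_sub hpos1, Real.rpow_one]
  have hrv : v ^ ((1 - a) / 2 - 1) = V / v := by
    rw [hVdef, Real.rpow_sub hpos2, Real.rpow_one]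
  rw [hru, hrv] at hD
  have hφs : φ s = U * V := hφ s
  set Q : ℝ := 2 * a * w + (a ^ 2 - 2) * s with hQdef
  -- the key algebraic identity
  have key : deriv φ s = Q * (φ s - s * deriv φ s) := by
    rw [hD, hφs]
    field_simp
    linear_combination (-(4 * a * w ^ 2 + 2 * a ^ 2 * w * s - 4 * w * s)) * hw2
  rw [div_eq_iff hden]
  exact key
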